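/- If T is a bounded linear operator on a complex Hilbert space and Re(T) is unitarily equivalent to a scalar multiple of the identity, then w(T) = √(‖Re(T)‖² + ‖Im(T)‖²). -/

import Mathlib

open Complex

variable {H : Type*} [NormedAddCommGroup H] [InnerProductSpace ℂ H] [CompleteSpace H]

/-- The numerical radius `w(T) = sup {|⟨Tx,x⟩| : ‖x‖ = 1}`. -/
noncomputable def numRadius (T : H →L[ℂ] H) : ℝ :=
  sSup {r : ℝ | ∃ x : H, ‖x‖ = 1 ∧ r = ‖(inner ℂ (T x) x : ℂ)‖}

/-- The Crawford number `m(T) = inf {|⟨Tx,x⟩| : ‖x‖ = 1}`. -/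
noncomputable def crawford (T : H →L[ℂ] H) : ℝ :=
  sInf {r : ℝ | ∃ x : H, ‖x‖ = 1 ∧ r = ‖(inner ℂ (T x) x : ℂ)‖}

/-- The real part `Re(T) = (T + T*)/2`. -/
noncomputable def reOp (T : H →L[ℂ] H) : H →L[ℂ] H := (2 : ℂ)⁻¹ • (T + star T)

/-- The imaginary part `Im(T) = (T - T*)/(2i)`. -/
noncomputable def imOp (T : H →L[ℂ] H) : H →L[ℂ] H := (2 * Complex.I)⁻¹ • (T - star T)

section Aux

local notation "⟪" x ", " y "⟫" => @inner ℂ _ _ x y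

set_option linter.unusedSectionVars false

lemma numSet_bddAbove (T : H →L[ℂ] H) :
    BddAbove {r : ℝ | ∃ x : H, ‖x‖ = 1 ∧ r = ‖(inner ℂ (T x) x : ℂ)‖} := by
  refine ⟨‖T‖, ?_⟩
  rintro r ⟨x, hx, rfl⟩
  calc ‖(⟪T x, x⟫ : ℂ)‖ ≤ ‖T x‖ * ‖x‖ := norm_inner_le_norm _ _
    _ ≤ (‖T‖ * ‖x‖) * ‖x‖ := by
        gcongr; exact T.le_opNorm x
    _ = ‖T‖ := by rw [hx]; ring

lemma numSet_nonempty [Nontrivial H] (T : H →L[ℂ] H) :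
    {r : ℝ | ∃ x : H, ‖x‖ = 1 ∧ r = ‖(inner ℂ (T x) x : ℂ)‖}.Nonempty := by
  obtain ⟨x, hx⟩ := exists_norm_eq H (zero_le_one)
  exact ⟨_, x, hx, rfl⟩

lemma numRadius_nonneg [Nontrivial H] (T : H →L[ℂ] H) : 0 ≤ numRadius T := by
  obtain ⟨x, hx⟩ := exists_norm_eq H (zero_le_one)
  exact le_trans (norm_nonneg _) (le_csSup (numSet_bddAbove T) ⟨x, hx, rfl⟩)

lemma abs_inner_le (T : H →L[ℂ] H) (z : H) :
    ‖(⟪T z, z⟫ : ℂ)‖ ≤ numRadius T * ‖z‖ ^ 2 := by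
  rcases eq_or_ne z 0 with rfl | hz
  · simp
  · have hnz : ‖z‖ ≠ 0 := norm_ne_zero_iff.mpr hz
    have hnzc : (‖z‖ : ℂ) ≠ 0 := by exact_mod_cast hnz
    set w : H := (‖z‖ : ℂ)⁻¹ • z with hw
    have hwn : ‖w‖ = 1 := by
      rw [hw, norm_smul, norm_inv, Complex.norm_real, Real.norm_of_nonneg (norm_nonneg z),
        inv_mul_cancel₀ hnz]
    have hmem : ‖(⟪T w, w⟫ : ℂ)‖ ≤ numRadius T :=
      le_csSup (numSet_bddAbove T) ⟨w, hwn, rfl⟩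
    have hzw : z = (‖z‖ : ℂ) • w := by
      rw [hw, smul_smul, mul_inv_cancel₀ hnzc, one_smul]
    have hin : (⟪T z, z⟫ : ℂ) = (‖z‖ : ℂ)^2 * ⟪T w, w⟫ := by
      conv_lhs => rw [hzw]
      rw [map_smul, inner_smul_left, inner_smul_right, Complex.conj_ofReal]
      ring
    rw [hin, norm_mul]
    have : ‖((‖z‖:ℂ))^2‖ = ‖z‖^2 := by
      rw [norm_pow, Complex.norm_real, Real.norm_of_nonneg (norm_nonneg z)]
    rw [this, mul_comm]
    exact mul_le_mul_of_nonneg_right hmem (by positivity)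

lemma numRadius_selfAdjoint [Nontrivial H] {B : H →L[ℂ] H} (hB : IsSelfAdjoint B) :
    numRadius B = ‖B‖ := by
  have hsym := hB.isSymmetric
  refine le_antisymm (csSup_le (numSet_nonempty B) ?_) ?_
  · rintro r ⟨x, hx, rfl⟩
    calc ‖(⟪B x, x⟫ : ℂ)‖ ≤ ‖B x‖ * ‖x‖ := norm_inner_le_norm _ _
      _ ≤ (‖B‖ * ‖x‖) * ‖x‖ := by gcongr; exact B.le_opNorm x
      _ = ‖B‖ := by rw [hx]; ring
  · refine B.opNorm_le_bound (numRadius_nonneg B) (fun x => ?_)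
    rcases eq_or_ne x 0 with rfl | hx
    · simp
    have hnx : ‖x‖ ≠ 0 := norm_ne_zero_iff.mpr hx
    have hnxc : (‖x‖ : ℂ) ≠ 0 := by exact_mod_cast hnx
    set u : H := (‖x‖ : ℂ)⁻¹ • x with hu
    have hun : ‖u‖ = 1 := by
      rw [hu, norm_smul, norm_inv, Complex.norm_real, Real.norm_of_nonneg (norm_nonneg x),
        inv_mul_cancel₀ hnx]
    have hBx : B x = (‖x‖ : ℂ) • B u := by
      rw [hu, map_smul, smul_smul, mul_inv_cancel₀ hnxc, one_smul]
    have hkey : ‖B u‖ ≤ numRadius B := by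
      rcases eq_or_ne (B u) 0 with h0 | h0
      · rw [h0, norm_zero]; exact numRadius_nonneg B
      have hnBu : ‖B u‖ ≠ 0 := norm_ne_zero_iff.mpr h0
      have hnBuc : (‖B u‖ : ℂ) ≠ 0 := by exact_mod_cast hnBu
      set y : H := (‖B u‖ : ℂ)⁻¹ • B u with hy
      have hyn : ‖y‖ = 1 := by
        rw [hy, norm_smul, norm_inv, Complex.norm_real,
          Real.norm_of_nonneg (norm_nonneg _), inv_mul_cancel₀ hnBu]
      have hre : (⟪B u, y⟫ : ℂ).re = ‖B u‖ := by
        have : (⟪B u, y⟫ : ℂ) = (‖B u‖ : ℂ) := by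
          rw [hy, inner_smul_right, inner_self_eq_norm_sq_to_K]
          field_simp
          rfl
        rw [this, Complex.ofReal_re]
      have hpol : (⟪B (u+y), u+y⟫ : ℂ) - ⟪B (u-y), u-y⟫ = 4 * (⟪B u, y⟫ : ℂ).re := by
        have h1 : (⟪B y, u⟫ : ℂ) = starRingEnd ℂ ⟪B u, y⟫ := by
          have h2 : (⟪B y, u⟫ : ℂ) = ⟪y, B u⟫ := hsym y u
          rw [h2, ← inner_conj_symm]
        have expand : (⟪B (u+y), u+y⟫ : ℂ) - ⟪B (u-y), u-y⟫
            = 2 * ((⟪B u, y⟫ : ℂ) + ⟪B y, u⟫) := by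
          simp only [map_add, map_sub, inner_add_left, inner_add_right,
            inner_sub_left, inner_sub_right]
          ring
        rw [expand, h1, Complex.add_conj]
        push_cast
        ring
      have h4 : 4 * ‖B u‖ ≤ numRadius B * ‖u+y‖^2 + numRadius B * ‖u-y‖^2 := by
        have e1 := abs_inner_le B (u+y)
        have e2 := abs_inner_le B (u-y)
        have h5 : (4 : ℝ) * ‖B u‖ = ((⟪B (u+y), u+y⟫ : ℂ) - ⟪B (u-y), u-y⟫).re := by
          rw [hpol, ← hre]; simp
        rw [h5]
        calc ((⟪B (u+y), u+y⟫ : ℂ) - ⟪B (u-y), u-y⟫).re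
            ≤ ‖(⟪B (u+y), u+y⟫ : ℂ) - ⟪B (u-y), u-y⟫‖ := Complex.re_le_norm _
          _ ≤ ‖(⟪B (u+y), u+y⟫ : ℂ)‖ + ‖(⟪B (u-y), u-y⟫ : ℂ)‖ := norm_sub_le _ _
          _ ≤ numRadius B * ‖u+y‖^2 + numRadius B * ‖u-y‖^2 := add_le_add e1 e2
      have hpar : ‖u+y‖^2 + ‖u-y‖^2 = 4 := by
        have := parallelogram_law_with_norm ℂ u y
        rw [hun, hyn] at this
        nlinarith [this]
      nlinarith [h4, hpar, numRadius_nonneg B]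
    calc ‖B x‖ = ‖x‖ * ‖B u‖ := by
          rw [hBx, norm_smul, Complex.norm_real, Real.norm_of_nonneg (norm_nonneg x)]
      _ ≤ numRadius B * ‖x‖ := by
          rw [mul_comm]; exact mul_le_mul_of_nonneg_right hkey (norm_nonneg x)

lemma decomp (T : H →L[ℂ] H) : T = reOp T + Complex.I • imOp T := by
  rw [reOp, imOp, smul_smul]
  have h1 : Complex.I * (2 * Complex.I)⁻¹ = (2:ℂ)⁻¹ := by
    field_simp
  rw [h1, ← smul_add]
  have h2 : (T + star T) + (T - star T) = (2:ℂ) • T := by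
    rw [two_smul]; abel
  rw [h2, smul_smul, inv_mul_cancel₀ (two_ne_zero), one_smul]

lemma imOp_selfAdjoint (T : H →L[ℂ] H) : IsSelfAdjoint (imOp T) := by
  rw [IsSelfAdjoint, imOp, star_smul, star_sub, star_star]
  have h1 : (star ((2 * Complex.I)⁻¹) : ℂ) = -(2 * Complex.I)⁻¹ := by
    simp [Complex.star_def, map_inv₀, Complex.conj_I]
  rw [h1, neg_smul, show (star T - T) = -(T - star T) by abel, smul_neg, neg_neg]

end Aux

theorem stmt12 (T : H →L[ℂ] H)
    (h : ∃ U ∈ unitary (H →L[ℂ] H), ∃ lam : ℝ,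
      star U * reOp T * U = (lam : ℂ) • (1 : H →L[ℂ] H)) :
    numRadius T = Real.sqrt (‖reOp T‖ ^ 2 + ‖imOp T‖ ^ 2) := by
  -- Step 1 : reOp T is a real scalar
  obtain ⟨U, hU, lam, heq⟩ := h
  have hRe : reOp T = (lam : ℂ) • (1 : H →L[ℂ] H) := by
    have h1 : U * (star U * reOp T * U) * star U = U * ((lam : ℂ) • 1) * star U := by
      rw [heq]
    have hUs : U * star U = 1 := Unitary.mul_star_self_of_mem hU
    calc reOp T = (U * star U) * reOp T * (U * star U) := by rw [hUs]; simp
      _ = U * (star U * reOp T * U) * star U := by noncomm_ring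
      _ = U * ((lam : ℂ) • 1) * star U := h1
      _ = (lam : ℂ) • (U * star U) := by
          rw [mul_smul_comm, smul_mul_assoc, mul_one]
      _ = (lam : ℂ) • 1 := by rw [hUs]
  set B := imOp T with hBdef
  have hB : IsSelfAdjoint B := imOp_selfAdjoint T
  have hT : ∀ x : H, T x = (lam : ℂ) • x + Complex.I • B x := by
    intro x
    conv_lhs => rw [decomp T, hRe]
    simp
    rfl
  rcases subsingleton_or_nontrivial H with hs | hn
  · -- trivial space
    have hset : {r : ℝ | ∃ x : H, ‖x‖ = 1 ∧ r = ‖(inner ℂ (T x) x : ℂ)‖} = ∅ := by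
      ext r
      simp only [Set.mem_setOf_eq, Set.mem_empty_iff_false, iff_false]
      rintro ⟨x, hx, -⟩
      rw [Subsingleton.elim x 0, norm_zero] at hx
      exact one_ne_zero hx.symm
    have hz1 : reOp T = 0 := Subsingleton.elim _ _
    have hz2 : imOp T = 0 := Subsingleton.elim _ _
    rw [numRadius, hset, Real.sSup_empty, hz1, show B = 0 from hz2]
    simp
  · -- nontrivial space
    set g : ℝ → ℝ := fun t => Real.sqrt (lam ^ 2 + (max t 0) ^ 2) with hg
    have hmono : Monotone g := by
      intro a b hab
      apply Real.sqrt_le_sqrt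
      have h1 : max a 0 ≤ max b 0 := max_le_max hab le_rfl
      have h2 : (0:ℝ) ≤ max a 0 := le_max_right a 0
      nlinarith
    have hcont : ContinuousAt g (sSup {r : ℝ | ∃ x : H, ‖x‖ = 1 ∧ r = ‖(inner ℂ (B x) x : ℂ)‖}) := by
      apply Continuous.continuousAt
      apply Real.continuous_sqrt.comp
      continuity
    -- pointwise formula
    have hpt : ∀ x : H, ‖x‖ = 1 → ‖(inner ℂ (T x) x : ℂ)‖ = g ‖(inner ℂ (B x) x : ℂ)‖ := by
      intro x hx
      have hxx : (inner ℂ x x : ℂ) = 1 := by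
        rw [inner_self_eq_norm_sq_to_K, hx]; norm_num
      -- inner ℂ (B x) x is real
      have hreal : (inner ℂ (B x) x : ℂ) = ((inner ℂ (B x) x : ℂ).re : ℂ) := by
        have := hB.isSymmetric.conj_inner_sym x x
        rw [Complex.conj_eq_iff_re] at this
        exact this.symm
      set b : ℝ := (inner ℂ (B x) x : ℂ).re with hb
      have hTx : (inner ℂ (T x) x : ℂ) = (lam : ℂ) - Complex.I * (b : ℂ) := by
        rw [hT x, inner_add_left, inner_smul_left, inner_smul_left, hxx, ← hreal]
        simp [Complex.conj_ofReal, Complex.conj_I]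
        ring
      rw [hTx]
      have hnormb : ‖(inner ℂ (B x) x : ℂ)‖ = |b| := by
        rw [hreal]; exact Complex.norm_real b
      rw [hnormb, hg]
      simp only
      have hmax : max |b| 0 = |b| := max_eq_left (abs_nonneg b)
      rw [hmax]
      have : ((lam : ℂ) - Complex.I * (b : ℂ)).re = lam ∧
          ((lam : ℂ) - Complex.I * (b : ℂ)).im = -b := by
        constructor <;> simp
      rw [Complex.norm_def, Complex.normSq_apply, this.1, this.2]
      rw [_root_.sq_abs]
      ring_nf
    -- set equality
    have hsets : {r : ℝ | ∃ x : H, ‖x‖ = 1 ∧ r = ‖(inner ℂ (T x) x : ℂ)‖}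
        = g '' {r : ℝ | ∃ x : H, ‖x‖ = 1 ∧ r = ‖(inner ℂ (B x) x : ℂ)‖} := by
      ext r
      constructor
      · rintro ⟨x, hx, rfl⟩
        exact ⟨‖(inner ℂ (B x) x : ℂ)‖, ⟨x, hx, rfl⟩, (hpt x hx).symm⟩
      · rintro ⟨s, ⟨x, hx, rfl⟩, rfl⟩
        exact ⟨x, hx, (hpt x hx).symm⟩
    have hmain : numRadius T = g (numRadius B) := by
      rw [numRadius, hsets, numRadius]
      exact (hmono.map_csSup_of_continuousAt hcont (numSet_nonempty B)
        (numSet_bddAbove B)).symm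
    rw [hmain, numRadius_selfAdjoint hB]
    have hnormRe : ‖reOp T‖ = |lam| := by
      rw [hRe, norm_smul, norm_one, mul_one, Complex.norm_real, Real.norm_eq_abs]
    rw [hnormRe, hg]
    simp only
    rw [max_eq_left (norm_nonneg B), _root_.sq_abs]
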